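/- Let G be a finite group. Let C₁, C₂ be conjugacy classes of G with chosen representatives r₁ ∈ C₁, r₂ ∈ C₂ and transversals p₁ : C₁ → G, p₂ : C₂ → G (with r₁ = r₂ and p₁ = p₂ whenever C₁ = C₂), let R₁ be an irreducible unitary representation of Z(r₁) and R₂ an irreducible unitary representation of Z(r₂), and let 1 ≤ mᵢ ≤ d_{Rᵢ}, cᵢ ∈ Cᵢ. Then in the ribbon algebra of G: (i) if C₁ ≠ C₂, or c₁ ≠ c₂, or R₁ is not isomorphic to R₂, then P^{[C₁,R₁]}_{m₁,c₁} * P^{[C₂,R₂]}_{m₂,c₂} = 0; (ii) if C₁ = C₂ = C and R₁ = R₂ = R, then P^{[C,R]}_{m₁,c₁} * P^{[C,R]}_{m₂,c₂} = δ_{c₁,c₂}·δ_{m₁,m₂}·P^{[C,R]}_{m₁,c₁}. In particular each P^{[C,R]}_{m,c} is idempotent. -/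

import Mathlib

/-!
Statement 7: Orthogonality of the diagonal probing operators
`P^{[C,R]}_{m,c} := (|C|·d_R/|G|)·Σ_{z∈Z(r)} conj(ρ^R_{mm}(z))·F^{c, p(c)·z·p(c)⁻¹}`
in the ribbon algebra of a finite group `G`.
-/

open scoped Classical
open scoped Matrix

noncomputable section

/-- `F^{g,h}`: the indicator function of the pair `(g,h)`. -/
def Fgh {G : Type*} (g h : G) : G × G → ℂ := fun x => if x = (g, h) then 1 else 0

/-- The multiplication of the ribbon algebra:
`(f₁ * f₂)(a,b) = Σ_{c ∈ G} f₁(a,c)·f₂(a,c⁻¹·b)`. -/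
def rmul {G : Type*} [Group G] [Fintype G] (f₁ f₂ : G × G → ℂ) : G × G → ℂ :=
  fun x => ∑ c : G, f₁ (x.1, c) * f₂ (x.1, c⁻¹ * x.2)

/-- The conjugacy class of `r` in `G`, as a `Finset`. -/
def conjClass {G : Type*} [Group G] [Fintype G] (r : G) : Finset G :=
  Finset.image (fun g => g * r * g⁻¹) Finset.univ

/-- The centralizer `Z(r)` of `r` in `G`, as a `Finset`. -/
def centFinset {G : Type*} [Group G] [Fintype G] (r : G) : Finset G :=
  Finset.univ.filter fun z => z * r = r * z

section helpers
variable {G : Type*} [Group G] [Fintype G]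

lemma mem_centFinset {r z : G} : z ∈ centFinset r ↔ z * r = r * z := by
  simp [centFinset]

lemma mem_conjClass {r x : G} : x ∈ conjClass r ↔ ∃ g : G, g * r * g⁻¹ = x := by
  simp [conjClass]

lemma one_mem_cent (r : G) : (1:G) ∈ centFinset r := by simp [mem_centFinset]

lemma mul_mem_cent {r z w : G} (hz : z ∈ centFinset r) (hw : w ∈ centFinset r) :
    z * w ∈ centFinset r := by
  rw [mem_centFinset] at *
  calc z * w * r = z * (w * r) := by group
    _ = z * (r * w) := by rw [hw]
    _ = (z * r) * w := by group
    _ = (r * z) * w := by rw [hz]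
    _ = r * (z * w) := by group

lemma inv_mem_cent {r z : G} (hz : z ∈ centFinset r) : z⁻¹ ∈ centFinset r := by
  rw [mem_centFinset] at *
  have : z⁻¹ * r * z = r * z⁻¹ * z := by
    rw [mul_assoc, ← hz, inv_mul_cancel_left, mul_assoc, inv_mul_cancel, mul_one]
  exact mul_right_cancel this

lemma conjClass_eq_of_mem {r c : G} (h : c ∈ conjClass r) : conjClass c = conjClass r := by
  obtain ⟨g, rfl⟩ := mem_conjClass.mp h
  ext x
  simp only [mem_conjClass]
  constructor
  · rintro ⟨k, rfl⟩; exact ⟨k * g, by group⟩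
  · rintro ⟨k, rfl⟩; exact ⟨k * g⁻¹, by group⟩

lemma rmul_Fgh (g₁ h₁ g₂ h₂ : G) :
    rmul (Fgh g₁ h₁) (Fgh g₂ h₂) = if g₁ = g₂ then Fgh g₁ (h₁ * h₂) else 0 := by
  funext x
  obtain ⟨a, b⟩ := x
  simp only [rmul, Fgh, Prod.mk.injEq]
  rw [Finset.sum_eq_single h₁ (fun c _ hc => by simp [hc]) (by simp)]
  by_cases hg : g₁ = g₂
  · subst hg
    by_cases ha : a = g₁
    · subst ha
      by_cases hb : b = h₁ * h₂
      · subst hb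
        simp [Fgh]
      · have h2 : ¬ (h₁⁻¹ * b = h₂) := fun h => hb (by rw [← h]; group)
        simp [Fgh, Prod.ext_iff, h2, hb]
    · simp [Fgh, Prod.ext_iff, ha]
  · by_cases ha : a = g₁
    · subst ha
      simp [Fgh, Prod.ext_iff, hg]
    · simp [Fgh, Prod.ext_iff, ha, hg]

lemma rmul_sum_left {ι : Type*} (s : Finset ι) (f : ι → G × G → ℂ) (g : G × G → ℂ) :
    rmul (∑ i ∈ s, f i) g = ∑ i ∈ s, rmul (f i) g := by
  funext x
  simp only [rmul, Finset.sum_apply, Finset.sum_mul]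
  rw [Finset.sum_comm]

lemma rmul_sum_right {ι : Type*} (s : Finset ι) (f : G × G → ℂ) (g : ι → G × G → ℂ) :
    rmul f (∑ i ∈ s, g i) = ∑ i ∈ s, rmul f (g i) := by
  funext x
  simp only [rmul, Finset.sum_apply, Finset.mul_sum]
  rw [Finset.sum_comm]

lemma rmul_smul_left (a : ℂ) (f g : G × G → ℂ) : rmul (a • f) g = a • rmul f g := by
  funext x
  simp [rmul, Finset.mul_sum, mul_assoc]

lemma rmul_smul_right (a : ℂ) (f g : G × G → ℂ) : rmul f (a • g) = a • rmul f g := by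
  funext x
  simp only [rmul, Pi.smul_apply, smul_eq_mul, Finset.mul_sum]
  congr 1; funext c; ring

lemma rmul_zero_right (f : G × G → ℂ) : rmul f 0 = 0 := by
  funext x; simp [rmul]

end helpers

/-- `ρ : G → Matrix (Fin d) (Fin d) ℂ` restricts to a unitary representation of the
centralizer `Z(r)`. -/
def IsCentRep {G : Type*} [Group G] [Fintype G] (r : G) {d : ℕ}
    (ρ : G → Matrix (Fin d) (Fin d) ℂ) : Prop :=
  ρ 1 = 1 ∧
  (∀ z w : G, z * r = r * z → w * r = r * w → ρ (z * w) = ρ z * ρ w) ∧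
  (∀ z : G, z * r = r * z → ρ z ∈ Matrix.unitaryGroup (Fin d) ℂ)

/-- `ρ` restricts to an irreducible unitary representation of `Z(r)` (the commutant of the
image consists of scalar matrices). -/
def IsCentIrrep {G : Type*} [Group G] [Fintype G] (r : G) {d : ℕ}
    (ρ : G → Matrix (Fin d) (Fin d) ℂ) : Prop :=
  IsCentRep r ρ ∧
  ∀ M : Matrix (Fin d) (Fin d) ℂ,
    (∀ z : G, z * r = r * z → M * ρ z = ρ z * M) →
    ∃ c : ℂ, M = c • (1 : Matrix (Fin d) (Fin d) ℂ)

/-- Isomorphism of two representations of the centralizer `Z(r)`, given by an invertible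
intertwiner. -/
def RepIsoOn {G : Type*} [Group G] [Fintype G] (r : G) {d₁ d₂ : ℕ}
    (ρ₁ : G → Matrix (Fin d₁) (Fin d₁) ℂ) (ρ₂ : G → Matrix (Fin d₂) (Fin d₂) ℂ) : Prop :=
  ∃ (U : Matrix (Fin d₁) (Fin d₂) ℂ) (V : Matrix (Fin d₂) (Fin d₁) ℂ),
    U * V = 1 ∧ V * U = 1 ∧ ∀ z : G, z * r = r * z → ρ₁ z * U = U * ρ₂ z

section rep
variable {G : Type*} [Group G] [Fintype G] {r : G} {d : ℕ}
  {ρ : G → Matrix (Fin d) (Fin d) ℂ}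

open scoped ComplexOrder in
lemma TT_zero {d₁ d₂ : ℕ} (T : Matrix (Fin d₁) (Fin d₂) ℂ) (h : T * Tᴴ = 0) : T = 0 :=
  Matrix.self_mul_conjTranspose_eq_zero.mp h

open scoped ComplexOrder in
lemma TT_zero' {d₁ d₂ : ℕ} (T : Matrix (Fin d₁) (Fin d₂) ℂ) (h : Tᴴ * T = 0) : T = 0 :=
  Matrix.conjTranspose_mul_self_eq_zero.mp h

lemma rho_mul_inv (hρ : IsCentRep r ρ) {z : G} (hz : z * r = r * z) :
    ρ z * ρ z⁻¹ = 1 := by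
  have hz' : z⁻¹ * r = r * z⁻¹ := mem_centFinset.mp (inv_mem_cent (mem_centFinset.mpr hz))
  rw [← hρ.2.1 z z⁻¹ hz hz', mul_inv_cancel, hρ.1]

lemma rho_inv_mul (hρ : IsCentRep r ρ) {z : G} (hz : z * r = r * z) :
    ρ z⁻¹ * ρ z = 1 := by
  have hz' : z⁻¹ * r = r * z⁻¹ := mem_centFinset.mp (inv_mem_cent (mem_centFinset.mpr hz))
  rw [← hρ.2.1 z⁻¹ z hz' hz, inv_mul_cancel, hρ.1]

lemma rho_inv_eq (hρ : IsCentRep r ρ) {z : G} (hz : z * r = r * z) :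
    ρ z⁻¹ = (ρ z)ᴴ := by
  have h1 : ρ z * (ρ z)ᴴ = 1 := by
    have := Matrix.mem_unitaryGroup_iff.mp (hρ.2.2 z hz)
    rwa [Matrix.star_eq_conjTranspose] at this
  calc ρ z⁻¹ = ρ z⁻¹ * (ρ z * (ρ z)ᴴ) := by rw [h1, mul_one]
    _ = (ρ z⁻¹ * ρ z) * (ρ z)ᴴ := by rw [mul_assoc]
    _ = (ρ z)ᴴ := by rw [rho_inv_mul hρ hz, one_mul]

lemma schurA {d₁ d₂ : ℕ} {ρ₁ : G → Matrix (Fin d₁) (Fin d₁) ℂ}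
    {ρ₂ : G → Matrix (Fin d₂) (Fin d₂) ℂ}
    (h₁ : IsCentIrrep r ρ₁) (h₂ : IsCentIrrep r ρ₂) (hni : ¬ RepIsoOn r ρ₁ ρ₂)
    (T : Matrix (Fin d₁) (Fin d₂) ℂ)
    (hT : ∀ z : G, z * r = r * z → ρ₁ z * T = T * ρ₂ z) : T = 0 := by
  rcases Nat.eq_zero_or_pos d₁ with hd₁ | hd₁
  · subst hd₁; ext i j; exact i.elim0
  have hT' : ∀ z : G, z * r = r * z → ρ₂ z * Tᴴ = Tᴴ * ρ₁ z := by
    intro z hz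
    have hz' : z⁻¹ * r = r * z⁻¹ := mem_centFinset.mp (inv_mem_cent (mem_centFinset.mpr hz))
    have h := congrArg Matrix.conjTranspose (hT z⁻¹ hz')
    rw [Matrix.conjTranspose_mul, Matrix.conjTranspose_mul, rho_inv_eq h₁.1 hz,
      rho_inv_eq h₂.1 hz, Matrix.conjTranspose_conjTranspose,
      Matrix.conjTranspose_conjTranspose] at h
    exact h.symm
  have hcomm : ∀ z : G, z * r = r * z → (T * Tᴴ) * ρ₁ z = ρ₁ z * (T * Tᴴ) := by
    intro z hz
    calc (T * Tᴴ) * ρ₁ z = T * (Tᴴ * ρ₁ z) := by rw [Matrix.mul_assoc]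
      _ = T * (ρ₂ z * Tᴴ) := by rw [hT' z hz]
      _ = (T * ρ₂ z) * Tᴴ := by rw [Matrix.mul_assoc]
      _ = (ρ₁ z * T) * Tᴴ := by rw [hT z hz]
      _ = ρ₁ z * (T * Tᴴ) := by rw [Matrix.mul_assoc]
  obtain ⟨lam, hlam⟩ := h₁.2 (T * Tᴴ) hcomm
  by_cases hl : lam = 0
  · rw [hl, zero_smul] at hlam
    exact TT_zero T hlam
  · exfalso
    have i0 : Fin d₁ := ⟨0, hd₁⟩
    have hd₂ : 0 < d₂ := by
      by_contra h
      have hd2 : d₂ = 0 := by omega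
      subst hd2
      have h0 : (T * Tᴴ) i0 i0 = 0 := by simp [Matrix.mul_apply]
      rw [hlam] at h0
      simp [Matrix.one_apply] at h0
      exact hl h0
    have hcomm2 : ∀ z : G, z * r = r * z → (Tᴴ * T) * ρ₂ z = ρ₂ z * (Tᴴ * T) := by
      intro z hz
      calc (Tᴴ * T) * ρ₂ z = Tᴴ * (T * ρ₂ z) := by rw [Matrix.mul_assoc]
        _ = Tᴴ * (ρ₁ z * T) := by rw [hT z hz]
        _ = (Tᴴ * ρ₁ z) * T := by rw [Matrix.mul_assoc]
        _ = (ρ₂ z * Tᴴ) * T := by rw [hT' z hz]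
        _ = ρ₂ z * (Tᴴ * T) := by rw [Matrix.mul_assoc]
    obtain ⟨mu, hmu⟩ := h₂.2 (Tᴴ * T) hcomm2
    have hsq : (Tᴴ * T) * (Tᴴ * T) = lam • (Tᴴ * T) := by
      calc (Tᴴ * T) * (Tᴴ * T) = Tᴴ * ((T * Tᴴ) * T) := by
            rw [Matrix.mul_assoc, Matrix.mul_assoc]
        _ = Tᴴ * ((lam • (1 : Matrix (Fin d₁) (Fin d₁) ℂ)) * T) := by rw [hlam]
        _ = lam • (Tᴴ * T) := by rw [Matrix.smul_mul, Matrix.one_mul, Matrix.mul_smul]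
    rw [hmu] at hsq
    have j0 : Fin d₂ := ⟨0, hd₂⟩
    have hentry : mu * mu = lam * mu := by
      have h := congrFun (congrFun hsq j0) j0
      simpa [Matrix.mul_apply, Matrix.one_apply] using h
    have hmu0 : mu ≠ 0 := by
      intro h0
      rw [h0, zero_smul] at hmu
      have hT0 : T = 0 := TT_zero' T hmu
      rw [hT0, Matrix.zero_mul] at hlam
      have h := congrFun (congrFun hlam.symm i0) i0
      simp [Matrix.one_apply] at h
      exact hl h
    have hmueq : mu = lam := mul_right_cancel₀ hmu0 hentry
    refine hni ⟨T, lam⁻¹ • Tᴴ, ?_, ?_, hT⟩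
    · rw [Matrix.mul_smul, hlam, smul_smul, inv_mul_cancel₀ hl, one_smul]
    · rw [Matrix.smul_mul, hmu, hmueq, smul_smul, inv_mul_cancel₀ hl, one_smul]

end rep

/-- The diagonal probing operator
`P^{[C,R]}_{m,c} := (|C|·d_R/|G|)·Σ_{z∈Z(r)} conj(ρ^R_{mm}(z))·F^{c, p(c)·z·p(c)⁻¹}`. -/
def Pdiag {G : Type*} [Group G] [Fintype G] (r : G) (p : G → G) {d : ℕ}
    (ρ : G → Matrix (Fin d) (Fin d) ℂ) (m : Fin d) (c : G) : G × G → ℂ :=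
  ((((conjClass r).card : ℂ) * (d : ℂ)) / (Fintype.card G : ℂ)) •
    ∑ z ∈ centFinset r, (starRingEnd ℂ) (ρ z m m) • Fgh c (p c * z * (p c)⁻¹)

section main
variable {G : Type*} [Group G] [Fintype G]

lemma rmul_sums {ι κ : Type*} (s : Finset ι) (t : Finset κ) (a : ι → ℂ) (b : κ → ℂ)
    (F : ι → G × G → ℂ) (Gf : κ → G × G → ℂ) :
    rmul (∑ i ∈ s, a i • F i) (∑ j ∈ t, b j • Gf j) =
      ∑ i ∈ s, ∑ j ∈ t, (a i * b j) • rmul (F i) (Gf j) := by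
  rw [rmul_sum_left]
  refine Finset.sum_congr rfl fun i _ => ?_
  rw [rmul_smul_left, rmul_sum_right, Finset.smul_sum]
  refine Finset.sum_congr rfl fun j _ => ?_
  rw [rmul_smul_right, smul_smul]

lemma rmul_Pdiag_ne {r₁ r₂ : G} (p₁ p₂ : G → G) {d₁ d₂ : ℕ}
    (ρ₁ : G → Matrix (Fin d₁) (Fin d₁) ℂ) (ρ₂ : G → Matrix (Fin d₂) (Fin d₂) ℂ)
    (m₁ : Fin d₁) (m₂ : Fin d₂) {c₁ c₂ : G} (h : c₁ ≠ c₂) :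
    rmul (Pdiag r₁ p₁ ρ₁ m₁ c₁) (Pdiag r₂ p₂ ρ₂ m₂ c₂) = 0 := by
  unfold Pdiag
  rw [rmul_smul_left, rmul_smul_right, rmul_sums]
  have : ∀ z ∈ centFinset r₁, ∀ w ∈ centFinset r₂,
      ((starRingEnd ℂ) (ρ₁ z m₁ m₁) * (starRingEnd ℂ) (ρ₂ w m₂ m₂)) •
        rmul (Fgh c₁ (p₁ c₁ * z * (p₁ c₁)⁻¹)) (Fgh c₂ (p₂ c₂ * w * (p₂ c₂)⁻¹)) = 0 := by
    intro z _ w _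
    rw [rmul_Fgh, if_neg h, smul_zero]
  rw [Finset.sum_congr rfl fun z hz => Finset.sum_congr rfl fun w hw => this z hz w hw]
  simp

lemma rmul_Pdiag_same {r : G} (p : G → G) {d₁ d₂ : ℕ}
    (ρ₁ : G → Matrix (Fin d₁) (Fin d₁) ℂ) (ρ₂ : G → Matrix (Fin d₂) (Fin d₂) ℂ)
    (m₁ : Fin d₁) (m₂ : Fin d₂) (c : G) :
    rmul (Pdiag r p ρ₁ m₁ c) (Pdiag r p ρ₂ m₂ c) =
      (((((conjClass r).card : ℂ) * (d₁ : ℂ)) / (Fintype.card G : ℂ)) *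
       ((((conjClass r).card : ℂ) * (d₂ : ℂ)) / (Fintype.card G : ℂ))) •
        ∑ u ∈ centFinset r,
          (∑ z ∈ centFinset r,
            (starRingEnd ℂ) (ρ₁ z m₁ m₁) * (starRingEnd ℂ) (ρ₂ (z⁻¹ * u) m₂ m₂)) •
          Fgh c (p c * u * (p c)⁻¹) := by
  unfold Pdiag
  rw [rmul_smul_left, rmul_smul_right, rmul_sums, smul_smul]
  congr 1
  have hstep : ∀ z ∈ centFinset r,
      ∑ w ∈ centFinset r,
        ((starRingEnd ℂ) (ρ₁ z m₁ m₁) * (starRingEnd ℂ) (ρ₂ w m₂ m₂)) •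
          rmul (Fgh c (p c * z * (p c)⁻¹)) (Fgh c (p c * w * (p c)⁻¹)) =
      ∑ u ∈ centFinset r,
        ((starRingEnd ℂ) (ρ₁ z m₁ m₁) * (starRingEnd ℂ) (ρ₂ (z⁻¹ * u) m₂ m₂)) •
          Fgh c (p c * u * (p c)⁻¹) := by
    intro z hz
    refine Finset.sum_nbij' (fun w => z * w) (fun u => z⁻¹ * u)
      (fun w hw => mul_mem_cent hz hw)
      (fun u hu => mul_mem_cent (inv_mem_cent hz) hu)
      (fun w _ => by group) (fun u _ => by group) ?_
    intro w _
    rw [rmul_Fgh, if_pos rfl, inv_mul_cancel_left]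
    congr 2
    group
  rw [Finset.sum_congr rfl hstep, Finset.sum_comm]
  refine Finset.sum_congr rfl fun u _ => ?_
  rw [Finset.sum_smul]

/-- orbit-stabilizer via the transversal -/
lemma class_mul_cent_card {r : G} (p : G → G)
    (hp : ∀ c ∈ conjClass r, p c * r * (p c)⁻¹ = c) :
    (conjClass r).card * (centFinset r).card = Fintype.card G := by
  have h1 : (Finset.univ : Finset G).card =
      ∑ c ∈ conjClass r, (Finset.univ.filter fun g => g * r * g⁻¹ = c).card :=
    Finset.card_eq_sum_card_fiberwise fun g _ => mem_conjClass.mpr ⟨g, rfl⟩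
  have h2 : ∀ c ∈ conjClass r,
      (Finset.univ.filter fun g => g * r * g⁻¹ = c).card = (centFinset r).card := by
    intro c hc
    refine Finset.card_nbij' (fun g => (p c)⁻¹ * g) (fun z => p c * z) ?_ ?_ ?_ ?_
    · intro g hg
      simp only [Finset.mem_coe, Finset.mem_filter, Finset.mem_univ, true_and] at hg
      rw [Finset.mem_coe, mem_centFinset]
      have key : ((p c)⁻¹ * g) * r * ((p c)⁻¹ * g)⁻¹ = r := by
        have : (p c)⁻¹ * (g * r * g⁻¹) * p c = (p c)⁻¹ * (p c * r * (p c)⁻¹) * p c := by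
          rw [hg, hp c hc]
        calc ((p c)⁻¹ * g) * r * ((p c)⁻¹ * g)⁻¹
            = (p c)⁻¹ * (g * r * g⁻¹) * p c := by group
          _ = (p c)⁻¹ * (p c * r * (p c)⁻¹) * p c := this
          _ = r := by group
      calc (p c)⁻¹ * g * r
          = (((p c)⁻¹ * g) * r * ((p c)⁻¹ * g)⁻¹) * ((p c)⁻¹ * g) := by group
        _ = r * ((p c)⁻¹ * g) := by rw [key]
    · intro z hz
      rw [Finset.mem_coe, mem_centFinset] at hz
      simp only [Finset.mem_coe, Finset.mem_filter, Finset.mem_univ, true_and]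
      have hz' : z * r * z⁻¹ = r := by rw [hz]; group
      calc p c * z * r * (p c * z)⁻¹ = p c * (z * r * z⁻¹) * (p c)⁻¹ := by group
        _ = p c * r * (p c)⁻¹ := by rw [hz']
        _ = c := hp c hc
    · intro g _; group
    · intro z _; group
  rw [Finset.card_univ] at h1
  calc (conjClass r).card * (centFinset r).card
      = ∑ _c ∈ conjClass r, (centFinset r).card := by rw [Finset.sum_const, smul_eq_mul]
    _ = ∑ c ∈ conjClass r, (Finset.univ.filter fun g => g * r * g⁻¹ = c).card :=
        (Finset.sum_congr rfl h2).symm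
    _ = Fintype.card G := h1.symm

variable {r : G} {d₁ d₂ : ℕ} {ρ₁ : G → Matrix (Fin d₁) (Fin d₁) ℂ}
  {ρ₂ : G → Matrix (Fin d₂) (Fin d₂) ℂ}

/-- The averaged intertwiner. -/
def Smat (r : G) (ρ₁ : G → Matrix (Fin d₁) (Fin d₁) ℂ)
    (ρ₂ : G → Matrix (Fin d₂) (Fin d₂) ℂ) (m₁ : Fin d₁) (m₂ : Fin d₂) :
    Matrix (Fin d₁) (Fin d₂) ℂ :=
  ∑ z ∈ centFinset r, ρ₁ z * Matrix.single m₁ m₂ (1 : ℂ) * ρ₂ z⁻¹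

lemma S_intertwines (hρ₁ : IsCentRep r ρ₁) (hρ₂ : IsCentRep r ρ₂)
    (m₁ : Fin d₁) (m₂ : Fin d₂) :
    ∀ w : G, w * r = r * w →
      ρ₁ w * Smat r ρ₁ ρ₂ m₁ m₂ = Smat r ρ₁ ρ₂ m₁ m₂ * ρ₂ w := by
  intro w hw
  have hwZ : w ∈ centFinset r := mem_centFinset.mpr hw
  unfold Smat
  rw [Matrix.mul_sum, Matrix.sum_mul]
  refine Finset.sum_nbij' (fun z => w * z) (fun u => w⁻¹ * u)
    (fun z hz => mul_mem_cent hwZ hz)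
    (fun u hu => mul_mem_cent (inv_mem_cent hwZ) hu)
    (fun z _ => by group) (fun u _ => by group) ?_
  intro z hz
  have hzZ := mem_centFinset.mp hz
  have hwz : w * z ∈ centFinset r := mul_mem_cent hwZ hz
  have hinv : (w * z)⁻¹ * w = z⁻¹ := by group
  calc ρ₁ w * (ρ₁ z * Matrix.single m₁ m₂ (1 : ℂ) * ρ₂ z⁻¹)
      = (ρ₁ w * ρ₁ z) * Matrix.single m₁ m₂ (1 : ℂ) * ρ₂ z⁻¹ := by
        rw [Matrix.mul_assoc, Matrix.mul_assoc, Matrix.mul_assoc]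
    _ = ρ₁ (w * z) * Matrix.single m₁ m₂ (1 : ℂ) * ρ₂ z⁻¹ := by
        rw [hρ₁.2.1 w z hw hzZ]
    _ = ρ₁ (w * z) * Matrix.single m₁ m₂ (1 : ℂ) * (ρ₂ (w * z)⁻¹ * ρ₂ w) := by
        congr 1
        rw [← hρ₂.2.1 (w * z)⁻¹ w (mem_centFinset.mp (inv_mem_cent hwz)) hw, hinv]
    _ = ρ₁ (w * z) * Matrix.single m₁ m₂ (1 : ℂ) * ρ₂ (w * z)⁻¹ * ρ₂ w := by
        simp only [Matrix.mul_assoc]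

lemma mulE_apply (A : Matrix (Fin d₁) (Fin d₁) ℂ) (B : Matrix (Fin d₂) (Fin d₂) ℂ)
    (i a : Fin d₁) (j b : Fin d₂) :
    (A * Matrix.single i j (1 : ℂ) * B) a b = A a i * B j b := by
  rw [Matrix.mul_assoc]
  rw [Matrix.mul_apply]
  have : ∀ k : Fin d₁, (Matrix.single i j (1 : ℂ) * B) k b
      = if k = i then B j b else 0 := by
    intro k
    rw [Matrix.mul_apply]
    by_cases hk : k = i
    · subst hk
      rw [if_pos rfl]
      rw [Finset.sum_eq_single j (fun t _ ht => by simp [Matrix.single, Ne.symm ht]) (by simp)]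
      simp [Matrix.single]
    · rw [if_neg hk]
      refine Finset.sum_eq_zero fun t _ => ?_
      simp [Matrix.single, Ne.symm hk]
  simp_rw [this, mul_ite, mul_zero]
  rw [Finset.sum_ite_eq' Finset.univ i (fun k => A a k * B j b)]
  simp

lemma coef_entry (hρ₂ : IsCentRep r ρ₂) (m₁ : Fin d₁) (m₂ : Fin d₂)
    {u : G} (hu : u ∈ centFinset r) :
    ∑ z ∈ centFinset r, ρ₁ z m₁ m₁ * ρ₂ (z⁻¹ * u) m₂ m₂ =
      (Smat r ρ₁ ρ₂ m₁ m₂ * ρ₂ u) m₁ m₂ := by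
  unfold Smat
  rw [Matrix.sum_mul, Matrix.sum_apply]
  refine (Finset.sum_congr rfl fun z hz => ?_).symm
  have hzi : z⁻¹ ∈ centFinset r := inv_mem_cent hz
  have h1 : ρ₁ z * Matrix.single m₁ m₂ (1 : ℂ) * ρ₂ z⁻¹ * ρ₂ u
      = ρ₁ z * Matrix.single m₁ m₂ (1 : ℂ) * ρ₂ (z⁻¹ * u) := by
    rw [Matrix.mul_assoc (ρ₁ z * Matrix.single m₁ m₂ (1 : ℂ)),
      ← hρ₂.2.1 z⁻¹ u (mem_centFinset.mp hzi) (mem_centFinset.mp hu)]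
  rw [h1, mulE_apply]

lemma trace_Smat {d : ℕ} {ρ : G → Matrix (Fin d) (Fin d) ℂ} (hρ : IsCentRep r ρ)
    (n₁ n₂ : Fin d) :
    Matrix.trace (Smat r ρ ρ n₁ n₂) =
      ((centFinset r).card : ℂ) * (if n₁ = n₂ then 1 else 0) := by
  unfold Smat
  rw [Matrix.trace_sum]
  have hterm : ∀ z ∈ centFinset r,
      Matrix.trace (ρ z * Matrix.single n₁ n₂ (1 : ℂ) * ρ z⁻¹)
        = (if n₁ = n₂ then (1 : ℂ) else 0) := by
    intro z hz
    rw [Matrix.trace_mul_cycle, rho_inv_mul hρ (mem_centFinset.mp hz), Matrix.one_mul]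
    by_cases h : n₁ = n₂
    · subst h
      simp [Matrix.trace, Matrix.diag, Matrix.single]
    · rw [if_neg h]
      simp only [Matrix.trace, Matrix.diag]
      refine Finset.sum_eq_zero fun a _ => ?_
      simp only [Matrix.single, Matrix.of_apply, ite_eq_right_iff, and_imp]
      intro h1 h2
      exact absurd (h1.trans h2.symm) h
  rw [Finset.sum_congr rfl hterm, Finset.sum_const, nsmul_eq_mul]

lemma conj_sum_coef (a b : G → ℂ) (s : Finset G) :
    ∑ z ∈ s, (starRingEnd ℂ) (a z) * (starRingEnd ℂ) (b z)
      = (starRingEnd ℂ) (∑ z ∈ s, a z * b z) := by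
  rw [map_sum]
  exact Finset.sum_congr rfl fun z _ => (map_mul _ _ _).symm

lemma part_i_noniso {p : G → G} {d₁ d₂ : ℕ}
    {ρ₁ : G → Matrix (Fin d₁) (Fin d₁) ℂ} {ρ₂ : G → Matrix (Fin d₂) (Fin d₂) ℂ}
    (hρ₁ : IsCentIrrep r ρ₁) (hρ₂ : IsCentIrrep r ρ₂)
    (hni : ¬ RepIsoOn r ρ₁ ρ₂) (m₁ : Fin d₁) (m₂ : Fin d₂) (c : G) :
    rmul (Pdiag r p ρ₁ m₁ c) (Pdiag r p ρ₂ m₂ c) = 0 := by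
  rw [rmul_Pdiag_same]
  have hS : Smat r ρ₁ ρ₂ m₁ m₂ = 0 :=
    schurA hρ₁ hρ₂ hni _ (S_intertwines hρ₁.1 hρ₂.1 m₁ m₂)
  have hK : ∀ u ∈ centFinset r,
      (∑ z ∈ centFinset r,
        (starRingEnd ℂ) (ρ₁ z m₁ m₁) * (starRingEnd ℂ) (ρ₂ (z⁻¹ * u) m₂ m₂)) = 0 := by
    intro u hu
    rw [conj_sum_coef, coef_entry hρ₂.1 m₁ m₂ hu, hS]
    simp
  rw [Finset.sum_congr rfl fun u hu => by rw [hK u hu, zero_smul]]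
  simp

lemma part_ii_main {p : G → G} (hp : ∀ c ∈ conjClass r, p c * r * (p c)⁻¹ = c)
    {d : ℕ} {ρ : G → Matrix (Fin d) (Fin d) ℂ} (hρ : IsCentIrrep r ρ)
    (m₁ m₂ : Fin d) (c₁ c₂ : G) :
    rmul (Pdiag r p ρ m₁ c₁) (Pdiag r p ρ m₂ c₂) =
      (if c₁ = c₂ ∧ m₁ = m₂ then (1 : ℂ) else 0) • Pdiag r p ρ m₁ c₁ := by
  have hd : (d : ℂ) ≠ 0 := Nat.cast_ne_zero.mpr m₁.pos.ne'
  have hG : (Fintype.card G : ℂ) ≠ 0 := Nat.cast_ne_zero.mpr Fintype.card_ne_zero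
  by_cases hc : c₁ = c₂
  swap
  · rw [rmul_Pdiag_ne p p ρ ρ m₁ m₂ hc, if_neg (fun h => hc h.1), zero_smul]
  subst hc
  rw [rmul_Pdiag_same p ρ ρ m₁ m₂ c₁]
  obtain ⟨lam, hS⟩ := hρ.2 (Smat r ρ ρ m₁ m₂)
    (fun z hz => (S_intertwines hρ.1 hρ.1 m₁ m₂ z hz).symm)
  have htr := trace_Smat hρ.1 m₁ m₂
  rw [hS, Matrix.trace_smul, Matrix.trace_one, smul_eq_mul] at htr
  simp only [Fintype.card_fin] at htr
  -- htr : lam * d = |Z| * δ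
  by_cases hm : m₁ = m₂
  · subst hm
    rw [if_pos ⟨rfl, rfl⟩, one_smul]
    rw [if_pos rfl, mul_one] at htr
    have hlam : lam = ((centFinset r).card : ℂ) / (d : ℂ) :=
      (eq_div_iff hd).mpr htr
    have hconj : (starRingEnd ℂ) lam = lam := by
      rw [hlam, map_div₀, map_natCast, map_natCast]
    have hK : ∀ u ∈ centFinset r,
        (∑ z ∈ centFinset r,
          (starRingEnd ℂ) (ρ z m₁ m₁) * (starRingEnd ℂ) (ρ (z⁻¹ * u) m₁ m₁)) =
          lam * (starRingEnd ℂ) (ρ u m₁ m₁) := by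
      intro u hu
      rw [conj_sum_coef, coef_entry hρ.1 m₁ m₁ hu, hS, Matrix.smul_mul, Matrix.one_mul]
      rw [Matrix.smul_apply, smul_eq_mul, map_mul, hconj]
    rw [Finset.sum_congr rfl fun u hu => by rw [hK u hu, mul_smul]]
    rw [← Finset.smul_sum, smul_smul]
    have hcount : ((conjClass r).card : ℂ) * ((centFinset r).card : ℂ)
        = (Fintype.card G : ℂ) := by
      exact_mod_cast congrArg (Nat.cast : ℕ → ℂ) (class_mul_cent_card p hp)
    have h1 : ((((conjClass r).card : ℂ) * (d : ℂ)) / (Fintype.card G : ℂ)) * lam = 1 := by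
      rw [hlam]
      field_simp
      linear_combination hcount
    have hscal : ((((conjClass r).card : ℂ) * (d : ℂ)) / (Fintype.card G : ℂ)) *
        ((((conjClass r).card : ℂ) * (d : ℂ)) / (Fintype.card G : ℂ)) * lam
        = (((conjClass r).card : ℂ) * (d : ℂ)) / (Fintype.card G : ℂ) := by
      rw [mul_assoc, h1, mul_one]
    rw [hscal]
    rfl
  · rw [if_neg (fun h => hm h.2), zero_smul]
    rw [if_neg hm, mul_zero] at htr
    have hlam : lam = 0 := by
      rcases mul_eq_zero.mp htr with h | h
      · exact h
      · exact absurd h hd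
    rw [hlam, zero_smul] at hS
    have hK : ∀ u ∈ centFinset r,
        (∑ z ∈ centFinset r,
          (starRingEnd ℂ) (ρ z m₁ m₁) * (starRingEnd ℂ) (ρ (z⁻¹ * u) m₂ m₂)) = 0 := by
      intro u hu
      rw [conj_sum_coef, coef_entry hρ.1 m₁ m₂ hu, hS]
      simp
    rw [Finset.sum_congr rfl fun u hu => by rw [hK u hu, zero_smul]]
    simp

end main

/-- Orthogonality and idempotency of the diagonal probing operators. -/
theorem probing_operators_orthogonal (G : Type*) [Group G] [Fintype G]
    (r₁ r₂ : G) (p₁ p₂ : G → G)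
    (hp₁ : ∀ c ∈ conjClass r₁, p₁ c * r₁ * (p₁ c)⁻¹ = c)
    (hp₂ : ∀ c ∈ conjClass r₂, p₂ c * r₂ * (p₂ c)⁻¹ = c)
    (hcoh : conjClass r₁ = conjClass r₂ → r₁ = r₂ ∧ p₁ = p₂)
    {d₁ d₂ : ℕ}
    (ρ₁ : G → Matrix (Fin d₁) (Fin d₁) ℂ) (ρ₂ : G → Matrix (Fin d₂) (Fin d₂) ℂ)
    (hρ₁ : IsCentIrrep r₁ ρ₁) (hρ₂ : IsCentIrrep r₂ ρ₂)
    (m₁ : Fin d₁) (m₂ : Fin d₂) (c₁ c₂ : G)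
    (hc₁ : c₁ ∈ conjClass r₁) (hc₂ : c₂ ∈ conjClass r₂) :
    -- (i) different classes, different class elements, or non-isomorphic representations
    ((conjClass r₁ ≠ conjClass r₂ ∨ c₁ ≠ c₂ ∨ ¬ RepIsoOn r₁ ρ₁ ρ₂) →
      rmul (Pdiag r₁ p₁ ρ₁ m₁ c₁) (Pdiag r₂ p₂ ρ₂ m₂ c₂) = 0) ∧
    -- (ii) same class and same representation
    (∀ (m₁' m₂' : Fin d₁) (c₁' c₂' : G), c₁' ∈ conjClass r₁ → c₂' ∈ conjClass r₁ →
      rmul (Pdiag r₁ p₁ ρ₁ m₁' c₁') (Pdiag r₁ p₁ ρ₁ m₂' c₂') =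
        (if c₁' = c₂' ∧ m₁' = m₂' then (1 : ℂ) else 0) • Pdiag r₁ p₁ ρ₁ m₁' c₁') ∧
    -- in particular, each diagonal probing operator is idempotent
    (∀ (m : Fin d₁) (c : G), c ∈ conjClass r₁ →
      rmul (Pdiag r₁ p₁ ρ₁ m c) (Pdiag r₁ p₁ ρ₁ m c) = Pdiag r₁ p₁ ρ₁ m c) := by
  have hdisj : ∀ {c : G}, c ∈ conjClass r₁ → c ∈ conjClass r₂ →
      conjClass r₁ = conjClass r₂ :=
    fun {c} h1 h2 => by rw [← conjClass_eq_of_mem h1, conjClass_eq_of_mem h2]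
  refine ⟨?_, ?_, ?_⟩
  · intro h
    by_cases hc : c₁ = c₂
    · subst hc
      have hC : conjClass r₁ = conjClass r₂ := hdisj hc₁ hc₂
      obtain ⟨hr, hpp⟩ := hcoh hC
      subst hr
      subst hpp
      have hni : ¬ RepIsoOn r₁ ρ₁ ρ₂ := by
        rcases h with h | h | h
        · exact absurd hC h
        · exact absurd rfl h
        · exact h
      exact part_i_noniso hρ₁ hρ₂ hni m₁ m₂ c₁
    · exact rmul_Pdiag_ne p₁ p₂ ρ₁ ρ₂ m₁ m₂ hc
  · intro m₁' m₂' c₁' c₂' _ _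
    exact part_ii_main hp₁ hρ₁ m₁' m₂' c₁' c₂'
  · intro m c _
    rw [part_ii_main hp₁ hρ₁ m m c c, if_pos ⟨rfl, rfl⟩, one_smul]

end
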